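/- Let n ≥ 2, let σ be a nonzero constant with σ ≠ 1, let F : ℝ → ℝ₊ be twice differentiable with F' ≠ 0, let β₁,…,βₙ be nonzero constants, and define f(x₁,…,xₙ) = F( β₁ x₁^{(σ−1)/σ} + … + βₙ xₙ^{(σ−1)/σ} ) on ℝ₊ⁿ. Then for every x ∈ ℝ₊ⁿ at which the denominator in the definition of H_{ij} is nonzero and all 1 ≤ i ≠ j ≤ n, the Hicks elasticity of substitution satisfies H_{ij}(x) = σ; i.e. the homothetic generalized ACMS production function has constant Hicks elasticity of substitution equal to σ. -/

import Mathlib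

open Real Finset

/-- The partial derivative of `f : ℝⁿ → ℝ` in the `i`-th coordinate direction. -/
noncomputable def pderiv' {n : ℕ} (f : (Fin n → ℝ) → ℝ) (i : Fin n) (x : Fin n → ℝ) : ℝ :=
  deriv (fun t => f (Function.update x i t)) (x i)

/-- The denominator in the definition of the Hicks elasticity of substitution. -/
noncomputable def hicksDenom {n : ℕ} (f : (Fin n → ℝ) → ℝ) (i j : Fin n)
    (x : Fin n → ℝ) : ℝ :=
  pderiv' (pderiv' f i) i x / (pderiv' f i x) ^ 2
    - 2 * pderiv' (pderiv' f j) i x / (pderiv' f i x * pderiv' f j x)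
    + pderiv' (pderiv' f j) j x / (pderiv' f j x) ^ 2

/-- The Hicks elasticity of substitution of the `i`-th production variable
with respect to the `j`-th one. -/
noncomputable def hicks {n : ℕ} (f : (Fin n → ℝ) → ℝ) (i j : Fin n)
    (x : Fin n → ℝ) : ℝ :=
  -(1 / (x i * pderiv' f i x) + 1 / (x j * pderiv' f j x)) / hicksDenom f i j x

lemma sum_update_eq {n : ℕ} (β : Fin n → ℝ) (ρ : ℝ) (x : Fin n → ℝ) (k : Fin n) (t : ℝ) :
    ∑ m, β m * (Function.update x k t m) ^ ρ
      = β k * t ^ ρ + ∑ m ∈ Finset.univ.erase k, β m * x m ^ ρ := by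
  rw [← Finset.add_sum_erase _ _ (Finset.mem_univ k), Function.update_self]
  congr 1
  refine Finset.sum_congr rfl fun m hm => ?_
  rw [Function.update_of_ne (Finset.ne_of_mem_erase hm)]

lemma pderiv_eq {n : ℕ} (F : ℝ → ℝ) (hF1 : Differentiable ℝ F) (ρ : ℝ) (β : Fin n → ℝ)
    (f : (Fin n → ℝ) → ℝ)
    (hf : ∀ x : Fin n → ℝ, (∀ i, 0 < x i) → f x = F (∑ m, β m * x m ^ ρ))
    (x : Fin n → ℝ) (hx : ∀ i, 0 < x i) (k : Fin n) :
    pderiv' f k x = deriv F (∑ m, β m * x m ^ ρ) * (β k * (ρ * x k ^ (ρ - 1))) := by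
  set C := ∑ m ∈ Finset.univ.erase k, β m * x m ^ ρ with hC
  have hx0 : ∑ m, β m * x m ^ ρ = β k * (x k) ^ ρ + C := by
    have := sum_update_eq β ρ x k (x k); rwa [Function.update_eq_self] at this
  have heq : (fun t => f (Function.update x k t)) =ᶠ[nhds (x k)]
      (fun t => F (β k * t ^ ρ + C)) := by
    filter_upwards [isOpen_Ioi.eventually_mem (Set.mem_Ioi.mpr (hx k))] with t ht
    have hpos : ∀ i, 0 < Function.update x k t i := by
      intro i
      rcases eq_or_ne i k with rfl | h
      · simpa using ht
      · rw [Function.update_of_ne h]; exact hx i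
    rw [hf _ hpos, sum_update_eq]
  have h1 : HasDerivAt (fun t : ℝ => β k * t ^ ρ + C)
      (β k * (ρ * x k ^ (ρ - 1))) (x k) :=
    ((Real.hasDerivAt_rpow_const (x := x k) (p := ρ)
      (Or.inl (ne_of_gt (hx k)))).const_mul (β k)).add_const C
  have hd : HasDerivAt (fun t => F (β k * t ^ ρ + C))
      (deriv F (β k * (x k) ^ ρ + C) * (β k * (ρ * x k ^ (ρ - 1)))) (x k) :=
    ((hF1 _).hasDerivAt).comp (x k) h1
  rw [pderiv', heq.deriv_eq, hd.deriv, hx0]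

lemma pderiv2_off {n : ℕ} (F : ℝ → ℝ) (hF1 : Differentiable ℝ F)
    (hF2 : Differentiable ℝ (deriv F)) (ρ : ℝ) (β : Fin n → ℝ)
    (f : (Fin n → ℝ) → ℝ)
    (hf : ∀ x : Fin n → ℝ, (∀ i, 0 < x i) → f x = F (∑ m, β m * x m ^ ρ))
    (x : Fin n → ℝ) (hx : ∀ i, 0 < x i) (i j : Fin n) (hij : i ≠ j) :
    pderiv' (pderiv' f j) i x
      = deriv (deriv F) (∑ m, β m * x m ^ ρ)
          * (β i * (ρ * x i ^ (ρ - 1))) * (β j * (ρ * x j ^ (ρ - 1))) := by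
  set C := ∑ m ∈ Finset.univ.erase i, β m * x m ^ ρ with hC
  have hx0 : ∑ m, β m * x m ^ ρ = β i * (x i) ^ ρ + C := by
    have := sum_update_eq β ρ x i (x i); rwa [Function.update_eq_self] at this
  have heq : (fun t => pderiv' f j (Function.update x i t)) =ᶠ[nhds (x i)]
      (fun t => deriv F (β i * t ^ ρ + C) * (β j * (ρ * x j ^ (ρ - 1)))) := by
    filter_upwards [isOpen_Ioi.eventually_mem (Set.mem_Ioi.mpr (hx i))] with t ht
    have hpos : ∀ m, 0 < Function.update x i t m := by
      intro m
      rcases eq_or_ne m i with rfl | h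
      · simpa using ht
      · rw [Function.update_of_ne h]; exact hx m
    rw [pderiv_eq F hF1 ρ β f hf _ hpos j, sum_update_eq,
      Function.update_of_ne hij.symm]
  have h1 : HasDerivAt (fun t : ℝ => β i * t ^ ρ + C)
      (β i * (ρ * x i ^ (ρ - 1))) (x i) :=
    ((Real.hasDerivAt_rpow_const (x := x i) (p := ρ)
      (Or.inl (ne_of_gt (hx i)))).const_mul (β i)).add_const C
  have hd : HasDerivAt (fun t => deriv F (β i * t ^ ρ + C) * (β j * (ρ * x j ^ (ρ - 1))))
      (deriv (deriv F) (β i * (x i) ^ ρ + C)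
        * (β i * (ρ * x i ^ (ρ - 1))) * (β j * (ρ * x j ^ (ρ - 1)))) (x i) :=
    (((hF2 _).hasDerivAt).comp (x i) h1).mul_const _
  rw [pderiv', heq.deriv_eq, hd.deriv, hx0]

lemma pderiv2_diag {n : ℕ} (F : ℝ → ℝ) (hF1 : Differentiable ℝ F)
    (hF2 : Differentiable ℝ (deriv F)) (ρ : ℝ) (β : Fin n → ℝ)
    (f : (Fin n → ℝ) → ℝ)
    (hf : ∀ x : Fin n → ℝ, (∀ i, 0 < x i) → f x = F (∑ m, β m * x m ^ ρ))
    (x : Fin n → ℝ) (hx : ∀ i, 0 < x i) (k : Fin n) :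
    pderiv' (pderiv' f k) k x
      = deriv (deriv F) (∑ m, β m * x m ^ ρ)
          * (β k * (ρ * x k ^ (ρ - 1))) * (β k * (ρ * x k ^ (ρ - 1)))
        + deriv F (∑ m, β m * x m ^ ρ) * (β k * (ρ * ((ρ - 1) * x k ^ (ρ - 2)))) := by
  set C := ∑ m ∈ Finset.univ.erase k, β m * x m ^ ρ with hC
  have hx0 : ∑ m, β m * x m ^ ρ = β k * (x k) ^ ρ + C := by
    have := sum_update_eq β ρ x k (x k); rwa [Function.update_eq_self] at this
  have heq : (fun t => pderiv' f k (Function.update x k t)) =ᶠ[nhds (x k)]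
      (fun t => deriv F (β k * t ^ ρ + C) * (β k * (ρ * t ^ (ρ - 1)))) := by
    filter_upwards [isOpen_Ioi.eventually_mem (Set.mem_Ioi.mpr (hx k))] with t ht
    have hpos : ∀ m, 0 < Function.update x k t m := by
      intro m
      rcases eq_or_ne m k with rfl | h
      · simpa using ht
      · rw [Function.update_of_ne h]; exact hx m
    rw [pderiv_eq F hF1 ρ β f hf _ hpos k, sum_update_eq, Function.update_self]
  have h1 : HasDerivAt (fun t : ℝ => β k * t ^ ρ + C)
      (β k * (ρ * x k ^ (ρ - 1))) (x k) :=
    ((Real.hasDerivAt_rpow_const (x := x k) (p := ρ)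
      (Or.inl (ne_of_gt (hx k)))).const_mul (β k)).add_const C
  have h2 : HasDerivAt (fun t : ℝ => β k * (ρ * t ^ (ρ - 1)))
      (β k * (ρ * ((ρ - 1) * x k ^ (ρ - 2)))) (x k) := by
    have e : ρ - 1 - 1 = ρ - 2 := by ring
    have := ((Real.hasDerivAt_rpow_const (x := x k) (p := ρ - 1)
      (Or.inl (ne_of_gt (hx k)))).const_mul ρ).const_mul (β k)
    rwa [e] at this
  have hF : HasDerivAt (fun t => deriv F (β k * t ^ ρ + C))
      (deriv (deriv F) (β k * (x k) ^ ρ + C) * (β k * (ρ * x k ^ (ρ - 1)))) (x k) :=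
    ((hF2 _).hasDerivAt).comp (x k) h1
  have hd : HasDerivAt (fun t => deriv F (β k * t ^ ρ + C) * (β k * (ρ * t ^ (ρ - 1)))) _ (x k) :=
    hF.mul h2
  rw [pderiv', heq.deriv_eq, hd.deriv, hx0]

set_option maxHeartbeats 1000000 in
lemma alg_key (σ p q r s bi bj xi xj : ℝ) (hσ0 : σ ≠ 0) (hσ1 : σ - 1 ≠ 0)
    (hp : p ≠ 0) (hr : r ≠ 0) (hs : s ≠ 0) (hbi : bi ≠ 0) (hbj : bj ≠ 0)
    (hxi : xi ≠ 0) (hxj : xj ≠ 0) :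
    -(1 / (xi * (p * (bi * ((σ - 1) / σ * (r / xi)))))
        + 1 / (xj * (p * (bj * ((σ - 1) / σ * (s / xj)))))) =
      σ * ((q * (bi * ((σ - 1) / σ * (r / xi))) * (bi * ((σ - 1) / σ * (r / xi)))
              + p * (bi * ((σ - 1) / σ * (((σ - 1) / σ - 1) * (r / (xi * xi))))))
            / (p * (bi * ((σ - 1) / σ * (r / xi)))) ^ 2
          - 2 * (q * (bi * ((σ - 1) / σ * (r / xi))) * (bj * ((σ - 1) / σ * (s / xj))))
            / (p * (bi * ((σ - 1) / σ * (r / xi))) * (p * (bj * ((σ - 1) / σ * (s / xj)))))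
          + (q * (bj * ((σ - 1) / σ * (s / xj))) * (bj * ((σ - 1) / σ * (s / xj)))
              + p * (bj * ((σ - 1) / σ * (((σ - 1) / σ - 1) * (s / (xj * xj))))))
            / (p * (bj * ((σ - 1) / σ * (s / xj)))) ^ 2) := by
  field_simp
  ring

/-- The homothetic generalized ACMS production function
`f = F(β₁ x₁^{(σ−1)/σ} + … + βₙ xₙ^{(σ−1)/σ})` (with `σ ≠ 0, 1` and nonzero
`βᵢ`) has constant Hicks elasticity of substitution equal to `σ` wherever
the denominator in `H_{ij}` is nonzero. -/
theorem stmt_19 (n : ℕ) (hn : 2 ≤ n) (σ : ℝ) (hσ0 : σ ≠ 0) (hσ1 : σ ≠ 1)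
    (F : ℝ → ℝ)
    (hFpos : ∀ u, 0 < F u)
    (hF1 : Differentiable ℝ F) (hF2 : Differentiable ℝ (deriv F))
    (hF' : ∀ u, deriv F u ≠ 0)
    (β : Fin n → ℝ) (hβ : ∀ i, β i ≠ 0)
    (f : (Fin n → ℝ) → ℝ)
    (hf : ∀ x : Fin n → ℝ, (∀ i, 0 < x i) →
      f x = F (∑ i, β i * (x i) ^ ((σ - 1) / σ))) :
    ∀ x : Fin n → ℝ, (∀ i, 0 < x i) → ∀ i j : Fin n, i ≠ j →
      hicksDenom f i j x ≠ 0 → hicks f i j x = σ := by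
  intro x hx i j hij hden
  set ρ : ℝ := (σ - 1) / σ with hρ
  have hσ1' : σ - 1 ≠ 0 := sub_ne_zero.mpr hσ1
  have e1i := pderiv_eq F hF1 ρ β f hf x hx i
  have e1j := pderiv_eq F hF1 ρ β f hf x hx j
  have e2ii := pderiv2_diag F hF1 hF2 ρ β f hf x hx i
  have e2jj := pderiv2_diag F hF1 hF2 ρ β f hf x hx j
  have e2ij := pderiv2_off F hF1 hF2 ρ β f hf x hx i j hij
  have hxi := hx i
  have hxj := hx j
  have hri : x i ^ (ρ - 1) = x i ^ ρ / x i := by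
    rw [Real.rpow_sub hxi, Real.rpow_one]
  have hrii : x i ^ (ρ - 2) = x i ^ ρ / (x i * x i) := by
    rw [show ρ - 2 = ρ - 1 - 1 by ring, Real.rpow_sub hxi, Real.rpow_sub hxi,
      Real.rpow_one, div_div]
  have hrj : x j ^ (ρ - 1) = x j ^ ρ / x j := by
    rw [Real.rpow_sub hxj, Real.rpow_one]
  have hrjj : x j ^ (ρ - 2) = x j ^ ρ / (x j * x j) := by
    rw [show ρ - 2 = ρ - 1 - 1 by ring, Real.rpow_sub hxj, Real.rpow_sub hxj,
      Real.rpow_one, div_div]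
  rw [hicks, div_eq_iff hden, hicksDenom, e1i, e1j, e2ii, e2jj, e2ij,
    hri, hrii, hrj, hrjj, hρ]
  exact alg_key σ (deriv F _) (deriv (deriv F) _) (x i ^ ρ) (x j ^ ρ)
    (β i) (β j) (x i) (x j) hσ0 hσ1' (hF' _)
    (ne_of_gt (Real.rpow_pos_of_pos hxi ρ)) (ne_of_gt (Real.rpow_pos_of_pos hxj ρ))
    (hβ i) (hβ j) (ne_of_gt hxi) (ne_of_gt hxj)
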